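/- Let (φₙ)_{n ≥ 1} be the unique family of order-n grid enumerations satisfying the adjacency condition (consecutive cells edge-adjacent), the endpoint condition (φₙ(0) = (0,0) and φₙ(4^n − 1) = (2^n − 1, 0)), and the nesting condition (for all j < 4^{n+1}, integer division of both coordinates of φ_{n+1}(j) by 2 yields φₙ(⌊j/4⌋)), i.e. the order-n Hilbert curves. Then for every n and all indices i < j < 4^n, the squared Euclidean distance between the cells satisfies (a − a')² + (b − b')² ≤ 6·(j − i), where φₙ(i) = (a,b) and φₙ(j) = (a',b') with coordinates viewed as integers; that is, the dilation factor of every finite-order Hilbert curve approximation is at most 6. -/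

import Mathlib

/-- An order-`n` grid enumeration: a bijection between `Fin (4^n)` and the cells of the
`2^n × 2^n` grid; cell `(a,b)` represents the subsquare with lower-left corner
`(a/2^n, b/2^n)`. -/
abbrev GridEnum (n : ℕ) := Fin (4 ^ n) ≃ Fin (2 ^ n) × Fin (2 ^ n)

/-- Two grid cells are edge-adjacent if their coordinates (as integers) satisfy
`|a − a'| + |b − b'| = 1`. -/
def edgeAdj {m : ℕ} (c d : Fin m × Fin m) : Prop :=
  |((c.1 : ℕ) : ℤ) - ((d.1 : ℕ) : ℤ)| + |((c.2 : ℕ) : ℤ) - ((d.2 : ℕ) : ℤ)| = 1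

/-- Two grid cells are king-adjacent if their coordinates (as integers) satisfy
`max (|a − a'|) (|b − b'|) = 1`. -/
def kingAdj {m : ℕ} (c d : Fin m × Fin m) : Prop :=
  max |((c.1 : ℕ) : ℤ) - ((d.1 : ℕ) : ℤ)| |((c.2 : ℕ) : ℤ) - ((d.2 : ℕ) : ℤ)| = 1

/-- Adjacency condition: any two consecutive cells of the enumeration are edge-adjacent. -/
def ConsecEdgeAdj {n : ℕ} (φ : GridEnum n) : Prop :=
  ∀ (j : ℕ) (h : j + 1 < 4 ^ n), edgeAdj (φ ⟨j, Nat.lt_of_succ_lt h⟩) (φ ⟨j + 1, h⟩)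

/-- Any two consecutive cells of the enumeration are king-adjacent. -/
def ConsecKingAdj {n : ℕ} (φ : GridEnum n) : Prop :=
  ∀ (j : ℕ) (h : j + 1 < 4 ^ n), kingAdj (φ ⟨j, Nat.lt_of_succ_lt h⟩) (φ ⟨j + 1, h⟩)

/-- Endpoint condition: the enumeration starts at the lower-left cell `(0,0)` and ends
at the lower-right cell `(2^n − 1, 0)`. -/
def EndpointCond {n : ℕ} (φ : GridEnum n) : Prop :=
  φ ⟨0, by positivity⟩ = (⟨0, by positivity⟩, ⟨0, by positivity⟩) ∧
  φ ⟨4 ^ n - 1, Nat.sub_lt (by positivity) Nat.one_pos⟩ =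
    (⟨2 ^ n - 1, Nat.sub_lt (by positivity) Nat.one_pos⟩, ⟨0, by positivity⟩)

/-- Nesting condition: integer division of both coordinates of `φₙ₊₁ j` by 2 yields
`φₙ ⌊j/4⌋`. -/
def Nests {n : ℕ} (φn : GridEnum n) (φn1 : GridEnum (n + 1)) : Prop :=
  ∀ j : Fin (4 ^ (n + 1)),
    ((φn1 j).1 : ℕ) / 2 =
      ((φn ⟨(j : ℕ) / 4, by
        have hj : (j : ℕ) < 4 ^ n * 4 := by simpa [pow_succ] using j.isLt
        omega⟩).1 : ℕ) ∧
    ((φn1 j).2 : ℕ) / 2 =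
      ((φn ⟨(j : ℕ) / 4, by
        have hj : (j : ℕ) < 4 ^ n * 4 := by simpa [pow_succ] using j.isLt
        omega⟩).2 : ℕ)

set_option linter.all false
set_option maxHeartbeats 1000000

def hilb : ℕ → ℕ → ℕ × ℕ
  | 0, _ => (0, 0)
  | (n+1), j =>
    let q := j / 4 ^ n
    let r := j % 4 ^ n
    let p := hilb n r
    if q = 0 then (p.2, p.1)
    else if q = 1 then (p.1, p.2 + 2 ^ n)
    else if q = 2 then (p.1 + 2 ^ n, p.2 + 2 ^ n)
    else (2 ^ (n+1) - 1 - p.2, 2 ^ n - 1 - p.1)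

lemma hilb_lt (n j : ℕ) : (hilb n j).1 < 2 ^ n ∧ (hilb n j).2 < 2 ^ n := by
  induction n generalizing j with
  | zero => simp [hilb]
  | succ n ih =>
    have h := ih (j % 4 ^ n)
    have h2 : (0:ℕ) < 2 ^ n := Nat.pow_pos (by norm_num)
    simp only [hilb]
    split_ifs <;> simp only [pow_succ] <;> omega

lemma hilb_q0 (n r : ℕ) (h : r < 4 ^ n) :
    hilb (n+1) r = ((hilb n r).2, (hilb n r).1) := by
  have h1 : r / 4 ^ n = 0 := Nat.div_eq_of_lt h
  have h2 : r % 4 ^ n = r := Nat.mod_eq_of_lt h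
  simp only [hilb, h1, h2]; norm_num

lemma hilb_q1 (n r : ℕ) (h : r < 4 ^ n) :
    hilb (n+1) (4 ^ n + r) = ((hilb n r).1, (hilb n r).2 + 2 ^ n) := by
  have hp : (0:ℕ) < 4 ^ n := Nat.pow_pos (by norm_num)
  have h1 : (4 ^ n + r) / 4 ^ n = 1 := by
    rw [Nat.add_div_left _ hp, Nat.div_eq_of_lt h]
  have h2 : (4 ^ n + r) % 4 ^ n = r := by
    rw [Nat.add_mod_left, Nat.mod_eq_of_lt h]
  simp only [hilb, h1, h2]; norm_num

lemma hilb_q2 (n r : ℕ) (h : r < 4 ^ n) :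
    hilb (n+1) (2 * 4 ^ n + r) = ((hilb n r).1 + 2 ^ n, (hilb n r).2 + 2 ^ n) := by
  have hp : (0:ℕ) < 4 ^ n := Nat.pow_pos (by norm_num)
  have h1 : (2 * 4 ^ n + r) / 4 ^ n = 2 := by
    rw [mul_comm, Nat.mul_add_div hp, Nat.div_eq_of_lt h]
  have h2 : (2 * 4 ^ n + r) % 4 ^ n = r := by
    rw [mul_comm, Nat.mul_add_mod, Nat.mod_eq_of_lt h]
  simp only [hilb, h1, h2]; norm_num

lemma hilb_q3 (n r : ℕ) (h : r < 4 ^ n) :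
    hilb (n+1) (3 * 4 ^ n + r) = (2 ^ (n+1) - 1 - (hilb n r).2, 2 ^ n - 1 - (hilb n r).1) := by
  have hp : (0:ℕ) < 4 ^ n := Nat.pow_pos (by norm_num)
  have h1 : (3 * 4 ^ n + r) / 4 ^ n = 3 := by
    rw [mul_comm, Nat.mul_add_div hp, Nat.div_eq_of_lt h]
  have h2 : (3 * 4 ^ n + r) % 4 ^ n = r := by
    rw [mul_comm, Nat.mul_add_mod, Nat.mod_eq_of_lt h]
  simp only [hilb, h1, h2]; norm_num

lemma hilb_zero (n : ℕ) : hilb n 0 = (0, 0) := by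
  induction n with
  | zero => rfl
  | succ n ih => rw [hilb_q0 n 0 (Nat.pow_pos (by norm_num)), ih]

lemma hilb_last (n : ℕ) : hilb n (4 ^ n - 1) = (2 ^ n - 1, 0) := by
  induction n with
  | zero => rfl
  | succ n ih =>
    have hp : (0:ℕ) < 4 ^ n := Nat.pow_pos (by norm_num)
    have h : 4 ^ (n+1) - 1 = 3 * 4 ^ n + (4 ^ n - 1) := by
      have : (4:ℕ) ^ (n+1) = 4 * 4 ^ n := by ring
      omega
    rw [h, hilb_q3 n _ (by omega), ih]
    have h2 : (0:ℕ) < 2 ^ n := Nat.pow_pos (by norm_num)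
    have h3 : (2:ℕ) ^ (n+1) = 2 * 2 ^ n := by ring
    simp

/-- edge adjacency on ℕ pairs -/
def NAdj (a b : ℕ × ℕ) : Prop :=
  (a.1 = b.1 ∧ (a.2 = b.2 + 1 ∨ b.2 = a.2 + 1)) ∨
  (a.2 = b.2 ∧ (a.1 = b.1 + 1 ∨ b.1 = a.1 + 1))

lemma hilb_adj : ∀ n j, j + 1 < 4 ^ n → NAdj (hilb n j) (hilb n (j+1)) := by
  intro n
  induction n with
  | zero => intro j h; simp at h
  | succ n ih =>
    intro j h
    have hp : (0:ℕ) < 4 ^ n := Nat.pow_pos (by norm_num)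
    have h4 : (4:ℕ) ^ (n+1) = 4 * 4 ^ n := by ring
    have h2 : (0:ℕ) < 2 ^ n := Nat.pow_pos (by norm_num)
    have h2' : (2:ℕ) ^ (n+1) = 2 * 2 ^ n := by ring
    obtain ⟨q, r, hq, hr, hj⟩ : ∃ q r, q < 4 ∧ r < 4 ^ n ∧ j = q * 4 ^ n + r := by
      refine ⟨j / 4 ^ n, j % 4 ^ n, ?_, Nat.mod_lt _ hp, ?_⟩
      · exact (Nat.div_lt_iff_lt_mul hp).2 (by omega)
      · rw [mul_comm]; exact (Nat.div_add_mod j (4 ^ n)).symm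
    subst hj
    by_cases hrs : r + 1 < 4 ^ n
    · -- same quadrant
      have hIH := ih r hrs
      obtain ⟨hx1, hy1⟩ := hilb_lt n r
      obtain ⟨hx2, hy2⟩ := hilb_lt n (r+1)
      interval_cases q
      · rw [show 0 * 4 ^ n + r + 1 = r + 1 by omega, show 0 * 4 ^ n + r = r by omega,
          hilb_q0 n r (by omega), hilb_q0 n (r+1) (by omega)]
        unfold NAdj at *; omega
      · rw [show 1 * 4 ^ n + r + 1 = 4 ^ n + (r + 1) by omega,
          show 1 * 4 ^ n + r = 4 ^ n + r by omega,
          hilb_q1 n r (by omega), hilb_q1 n (r+1) (by omega)]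
        unfold NAdj at *; omega
      · rw [show 2 * 4 ^ n + r + 1 = 2 * 4 ^ n + (r + 1) by omega,
          hilb_q2 n r (by omega), hilb_q2 n (r+1) (by omega)]
        unfold NAdj at *; omega
      · rw [show 3 * 4 ^ n + r + 1 = 3 * 4 ^ n + (r + 1) by omega,
          hilb_q3 n r (by omega), hilb_q3 n (r+1) (by omega)]
        unfold NAdj at *; omega
    · -- boundary: r = 4^n - 1
      have hr1 : r = 4 ^ n - 1 := by omega
      subst hr1
      interval_cases q
      · rw [show 0 * 4 ^ n + (4 ^ n - 1) + 1 = 4 ^ n + 0 by omega,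
          show 0 * 4 ^ n + (4 ^ n - 1) = 4 ^ n - 1 by omega,
          hilb_q0 n _ (by omega), hilb_q1 n 0 (by omega), hilb_last, hilb_zero]
        unfold NAdj; simp; omega
      · rw [show 1 * 4 ^ n + (4 ^ n - 1) + 1 = 2 * 4 ^ n + 0 by omega,
          show 1 * 4 ^ n + (4 ^ n - 1) = 4 ^ n + (4 ^ n - 1) by omega,
          hilb_q1 n _ (by omega), hilb_q2 n 0 (by omega), hilb_last, hilb_zero]
        unfold NAdj; simp; omega
      · rw [show 2 * 4 ^ n + (4 ^ n - 1) + 1 = 3 * 4 ^ n + 0 by omega,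
          hilb_q2 n _ (by omega), hilb_q3 n 0 (by omega), hilb_last, hilb_zero]
        unfold NAdj; simp; omega
      · exfalso; omega

lemma quad_decomp (n j : ℕ) (h : j < 4 ^ (n+1)) :
    ∃ q r, q < 4 ∧ r < 4 ^ n ∧ j = q * 4 ^ n + r := by
  have hp : (0:ℕ) < 4 ^ n := Nat.pow_pos (by norm_num)
  have h4 : (4:ℕ) ^ (n+1) = 4 * 4 ^ n := by ring
  refine ⟨j / 4 ^ n, j % 4 ^ n, ?_, Nat.mod_lt _ hp, ?_⟩
  · exact (Nat.div_lt_iff_lt_mul hp).2 (by omega)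
  · rw [mul_comm]; exact (Nat.div_add_mod j (4 ^ n)).symm

lemma hilb_nest : ∀ n j, j < 4 ^ (n+1) →
    (hilb (n+1) j).1 / 2 = (hilb n (j / 4)).1 ∧ (hilb (n+1) j).2 / 2 = (hilb n (j / 4)).2 := by
  intro n
  induction n with
  | zero =>
    intro j hj
    obtain ⟨h1, h2⟩ := hilb_lt 1 j
    rw [show hilb 0 (j / 4) = (0,0) from rfl]
    norm_num at h1 h2 ⊢
    omega
  | succ n ih =>
    intro j hj
    have hp : (0:ℕ) < 4 ^ n := Nat.pow_pos (by norm_num)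
    have h2 : (0:ℕ) < 2 ^ n := Nat.pow_pos (by norm_num)
    have e2 : (2:ℕ) ^ (n+1) = 2 * 2 ^ n := by ring
    have e2' : (2:ℕ) ^ (n+2) = 4 * 2 ^ n := by ring
    have e4 : (4:ℕ) ^ (n+1) = 4 * 4 ^ n := by ring
    obtain ⟨q, r, hq, hr, hj'⟩ := quad_decomp (n+1) j hj
    subst hj'
    have hd : (q * 4 ^ (n+1) + r) / 4 = q * 4 ^ n + r / 4 := by
      rw [show q * 4 ^ (n+1) + r = 4 * (q * 4 ^ n) + r by ring, Nat.mul_add_div (by norm_num)]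
    have hr4 : r / 4 < 4 ^ n := by omega
    obtain ⟨hX, hY⟩ := ih r hr
    obtain ⟨hx1, hy1⟩ := hilb_lt (n+1) r
    obtain ⟨hx2, hy2⟩ := hilb_lt n (r / 4)
    rw [hd]
    interval_cases q
    · rw [show 0 * 4 ^ (n+1) + r = r by omega, show 0 * 4 ^ n + r / 4 = r / 4 by omega,
        hilb_q0 (n+1) r hr, hilb_q0 n (r/4) hr4]
      exact ⟨hY, hX⟩
    · rw [show 1 * 4 ^ (n+1) + r = 4 ^ (n+1) + r by omega,
        show 1 * 4 ^ n + r / 4 = 4 ^ n + r / 4 by omega,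
        hilb_q1 (n+1) r hr, hilb_q1 n (r/4) hr4]
      constructor
      · exact hX
      · simp only; omega
    · rw [hilb_q2 (n+1) r hr, hilb_q2 n (r/4) hr4]
      constructor <;> simp only <;> omega
    · rw [hilb_q3 (n+1) r hr, hilb_q3 n (r/4) hr4]
      constructor <;> simp only <;> omega

lemma hilb_q0' (n r : ℕ) (hr : r < 4 ^ n) :
    hilb (n+1) (0 * 4 ^ n + r) = ((hilb n r).2, (hilb n r).1) := by
  rw [show 0 * 4 ^ n + r = r by omega]; exact hilb_q0 n r hr

lemma hilb_q1' (n r : ℕ) (hr : r < 4 ^ n) :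
    hilb (n+1) (1 * 4 ^ n + r) = ((hilb n r).1, (hilb n r).2 + 2 ^ n) := by
  rw [show 1 * 4 ^ n + r = 4 ^ n + r by omega]; exact hilb_q1 n r hr

lemma hilb_q2' (n r : ℕ) (hr : r < 4 ^ n) :
    hilb (n+1) (2 * 4 ^ n + r) = ((hilb n r).1 + 2 ^ n, (hilb n r).2 + 2 ^ n) :=
  hilb_q2 n r hr

lemma hilb_q3' (n r : ℕ) (hr : r < 4 ^ n) :
    hilb (n+1) (3 * 4 ^ n + r) = (2 ^ (n+1) - 1 - (hilb n r).2, 2 ^ n - 1 - (hilb n r).1) :=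
  hilb_q3 n r hr

lemma hilb_inj : ∀ n i j, i < 4 ^ n → j < 4 ^ n → hilb n i = hilb n j → i = j := by
  intro n
  induction n with
  | zero => intro i j hi hj _; omega
  | succ n ih =>
    intro i j hi hj heq
    have hp : (0:ℕ) < 4 ^ n := Nat.pow_pos (by norm_num)
    have h2 : (0:ℕ) < 2 ^ n := Nat.pow_pos (by norm_num)
    have e2 : (2:ℕ) ^ (n+1) = 2 * 2 ^ n := by ring
    obtain ⟨q1, r1, hq1, hr1, hi'⟩ := quad_decomp n i hi
    obtain ⟨q2, r2, hq2, hr2, hj'⟩ := quad_decomp n j hj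
    subst hi'; subst hj'
    obtain ⟨ha1, hb1⟩ := hilb_lt n r1
    obtain ⟨ha2, hb2⟩ := hilb_lt n r2
    interval_cases q1 <;> interval_cases q2 <;>
      simp only [hilb_q0' n r1 hr1, hilb_q1' n r1 hr1, hilb_q2' n r1 hr1, hilb_q3' n r1 hr1,
        hilb_q0' n r2 hr2, hilb_q1' n r2 hr2, hilb_q2' n r2 hr2, hilb_q3' n r2 hr2,
        Prod.mk.injEq] at heq <;>
      first
        | (exfalso; omega)
        | (have hr' : r1 = r2 :=
             ih r1 r2 hr1 hr2 (Prod.ext (by omega) (by omega))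
           omega)

lemma hilb_rev : ∀ n j, j < 4 ^ n →
    hilb n (4 ^ n - 1 - j) = (2 ^ n - 1 - (hilb n j).1, (hilb n j).2) := by
  intro n
  induction n with
  | zero => intro j hj; interval_cases j; rfl
  | succ n ih =>
    intro j hj
    have hp : (0:ℕ) < 4 ^ n := Nat.pow_pos (by norm_num)
    have h2 : (0:ℕ) < 2 ^ n := Nat.pow_pos (by norm_num)
    have e2 : (2:ℕ) ^ (n+1) = 2 * 2 ^ n := by ring
    have e4 : (4:ℕ) ^ (n+1) = 4 * 4 ^ n := by ring
    obtain ⟨q, r, hq, hr, hj'⟩ := quad_decomp n j hj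
    subst hj'
    have hr' : 4 ^ n - 1 - r < 4 ^ n := by omega
    have hIH := ih r hr
    obtain ⟨ha1, hb1⟩ := hilb_lt n r
    obtain ⟨ha2, hb2⟩ := hilb_lt n (4 ^ n - 1 - r)
    interval_cases q
    · rw [show 4 ^ (n+1) - 1 - (0 * 4 ^ n + r) = 3 * 4 ^ n + (4 ^ n - 1 - r) by omega,
        hilb_q3' n _ hr', hIH, hilb_q0' n r hr]
      refine Prod.ext ?_ ?_ <;> dsimp only <;> omega
    · rw [show 4 ^ (n+1) - 1 - (1 * 4 ^ n + r) = 2 * 4 ^ n + (4 ^ n - 1 - r) by omega,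
        hilb_q2' n _ hr', hIH, hilb_q1' n r hr]
      refine Prod.ext ?_ ?_ <;> dsimp only <;> omega
    · rw [show 4 ^ (n+1) - 1 - (2 * 4 ^ n + r) = 1 * 4 ^ n + (4 ^ n - 1 - r) by omega,
        hilb_q1' n _ hr', hIH, hilb_q2' n r hr]
      refine Prod.ext ?_ ?_ <;> dsimp only <;> omega
    · rw [show 4 ^ (n+1) - 1 - (3 * 4 ^ n + r) = 0 * 4 ^ n + (4 ^ n - 1 - r) by omega,
        hilb_q0' n _ hr', hIH, hilb_q3' n r hr]
      refine Prod.ext ?_ ?_ <;> dsimp only <;> omega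

lemma hilb_SL : ∀ n j, j < 4 ^ n →
    (hilb n j).1 ^ 2 + (hilb n j).2 ^ 2 + 2 * max (hilb n j).1 (hilb n j).2 ≤ 3 * j := by
  intro n
  induction n with
  | zero => intro j hj; interval_cases j; simp [hilb]
  | succ n ih =>
    intro j hj
    have hp : (0:ℕ) < 4 ^ n := Nat.pow_pos (by norm_num)
    have h2 : (0:ℕ) < 2 ^ n := Nat.pow_pos (by norm_num)
    have e2 : (2:ℕ) ^ (n+1) = 2 * 2 ^ n := by ring
    have eN : (2:ℕ) ^ n * 2 ^ n = 4 ^ n := by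
      rw [← mul_pow]; norm_num
    obtain ⟨q, r, hq, hr, hj'⟩ := quad_decomp n j hj
    subst hj'
    have hIH := ih r hr
    obtain ⟨ha1, hb1⟩ := hilb_lt n r
    set x := (hilb n r).1 with hxd
    set y := (hilb n r).2 with hyd
    have hmx : x ≤ max x y := le_max_left x y
    have hmy : y ≤ max x y := le_max_right x y
    interval_cases q
    · rw [hilb_q0' n r hr]
      dsimp only
      rw [max_comm]
      have h0 : 3 * (0 * 4 ^ n + r) = 3 * r := by ring
      rw [h0]
      linarith [hIH]
    · rw [hilb_q1' n r hr]
      simp only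
      rw [max_eq_right (show x ≤ y + 2 ^ n by omega)]
      have key : 2 ^ n * (y + 1) ≤ 2 ^ n * 2 ^ n := Nat.mul_le_mul_left _ (by omega)
      have h3 : x ^ 2 + y ^ 2 + 2 * y ≤ 3 * r := by linarith [hIH, hmy]
      linarith [h3, key, eN]
    · rw [hilb_q2' n r hr]
      simp only
      rw [max_add_add_right]
      have k1 : 2 ^ n * (y + 1) ≤ 2 ^ n * 2 ^ n := Nat.mul_le_mul_left _ (by omega)
      have k2 : 2 ^ n * (x + 1) ≤ 2 ^ n * 2 ^ n := Nat.mul_le_mul_left _ (by omega)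
      linarith [hIH, k1, k2, eN]
    · rw [hilb_q3' n r hr]
      simp only
      rw [max_eq_left (show 2 ^ n - 1 - x ≤ 2 ^ (n+1) - 1 - y by omega)]
      set u := 2 ^ (n+1) - 1 - y with hud
      set v := 2 ^ n - 1 - x with hvd
      have hu : u + y + 1 = 2 * 2 ^ n := by omega
      have hv : v + x + 1 = 2 ^ n := by omega
      have hIH' : x ^ 2 + y ^ 2 ≤ 3 * r := le_trans (Nat.le_add_right _ _) hIH
      have k1 : (u + y + 1) ^ 2 = (2 * 2 ^ n) ^ 2 := by rw [hu]
      have k2 : (v + x + 1) ^ 2 = (2 ^ n) ^ 2 := by rw [hv]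
      linarith [hIH', k1, k2, eN, Nat.zero_le (u * y), Nat.zero_le (v * x),
        Nat.zero_le (x ^ 2), Nat.zero_le (y ^ 2), Nat.zero_le v, Nat.zero_le x, Nat.zero_le y]

lemma hilb_EL (n j : ℕ) (hj : j < 4 ^ n) :
    (2 ^ n - 1 - (hilb n j).1) ^ 2 + (hilb n j).2 ^ 2 +
      2 * max (2 ^ n - 1 - (hilb n j).1) (hilb n j).2 ≤ 3 * (4 ^ n - 1 - j) := by
  have hp : (0:ℕ) < 4 ^ n := Nat.pow_pos (by norm_num)
  have h := hilb_SL n (4 ^ n - 1 - j) (by omega)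
  rw [hilb_rev n j hj] at h
  exact h

/-- key combination lemma for adjacent quadrants -/
lemma KL (u1 v1 u2 v2 p q : ℤ) (hu1 : 0 ≤ u1) (hv1 : 0 ≤ v1) (hu2 : 0 ≤ u2) (hv2 : 0 ≤ v2)
    (h1 : u1 ^ 2 + v1 ^ 2 + 2 * max u1 v1 ≤ 3 * p)
    (h2 : u2 ^ 2 + v2 ^ 2 + 2 * max u2 v2 ≤ 3 * q) :
    (1 + u1 + u2) ^ 2 + (v1 - v2) ^ 2 ≤ 6 * (p + q + 1) := by
  have m1 : u1 ≤ max u1 v1 := le_max_left _ _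
  have m2 : u2 ≤ max u2 v2 := le_max_left _ _
  nlinarith [sq_nonneg (u1 - u2), sq_nonneg (v1 + v2), mul_nonneg hv1 hv2]

/-- path through two corners, for quadrants two apart -/
lemma FAR (a1 b1 m1 m2 a2 b2 p q s : ℤ)
    (h1 : a1 ^ 2 + b1 ^ 2 ≤ 3 * p) (h2 : a2 ^ 2 + b2 ^ 2 ≤ 3 * q)
    (hm : m1 ^ 2 + m2 ^ 2 ≤ s + 1) (hpq : p + q ≤ s + 1) :
    (a1 + m1 + a2) ^ 2 + (b1 + m2 + b2) ^ 2 ≤ 6 * (p + q + s + 1) := by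
  nlinarith [sq_nonneg (a1 - m1), sq_nonneg (a1 - a2), sq_nonneg (m1 - a2),
    sq_nonneg (b1 - m2), sq_nonneg (b1 - b2), sq_nonneg (m2 - b2)]

/-- crude bound when the time difference is at least half the square -/
lemma CRUDE (x1 y1 x2 y2 m N : ℤ) (hN : 1 ≤ N)
    (hx1 : 0 ≤ x1) (hx1' : x1 < 2 * N) (hy1 : 0 ≤ y1) (hy1' : y1 < 2 * N)
    (hx2 : 0 ≤ x2) (hx2' : x2 < 2 * N) (hy2 : 0 ≤ y2) (hy2' : y2 < 2 * N)
    (hm : 2 * N ^ 2 + 1 ≤ m) :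
    (x2 - x1) ^ 2 + (y2 - y1) ^ 2 ≤ 6 * m := by
  have k1 : (2 * N - 1 - (x2 - x1)) * (2 * N - 1 + (x2 - x1)) ≥ 0 :=
    mul_nonneg (by linarith) (by linarith)
  have k2 : (2 * N - 1 - (y2 - y1)) * (2 * N - 1 + (y2 - y1)) ≥ 0 :=
    mul_nonneg (by linarith) (by linarith)
  nlinarith [k1, k2]

set_option maxHeartbeats 1000000 in
lemma hilb_main : ∀ n i j : ℕ, i < j → j < 4 ^ n →
    (((hilb n j).1 : ℤ) - ((hilb n i).1 : ℤ)) ^ 2 +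
      (((hilb n j).2 : ℤ) - ((hilb n i).2 : ℤ)) ^ 2 ≤ 6 * ((j : ℤ) - (i : ℤ)) := by
  intro n
  induction n with
  | zero => intro i j hij hj; exact absurd hij (by omega)
  | succ n ih =>
    intro i j hij hj
    have hp : (0:ℕ) < 4 ^ n := Nat.pow_pos (by norm_num)
    have h2 : (0:ℕ) < 2 ^ n := Nat.pow_pos (by norm_num)
    have e2 : (2:ℕ) ^ (n+1) = 2 * 2 ^ n := by ring
    have e4 : (4:ℕ) ^ (n+1) = 4 * 4 ^ n := by ring
    have eN : (2:ℕ) ^ n * 2 ^ n = 4 ^ n := by rw [← mul_pow]; norm_num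
    have ePZ2 : (((2:ℕ) ^ n : ℕ) : ℤ) = (2:ℤ) ^ n := by push_cast; ring
    have ePZ4 : (((4:ℕ) ^ n : ℕ) : ℤ) = (4:ℤ) ^ n := by push_cast; ring
    have eZN : (2:ℤ) ^ n * (2:ℤ) ^ n = (4:ℤ) ^ n := by rw [← mul_pow]; norm_num
    obtain ⟨q1, r1, hq1, hr1, hi'⟩ := quad_decomp n i (by omega)
    obtain ⟨q2, r2, hq2, hr2, hj'⟩ := quad_decomp n j hj
    subst hi'; subst hj'
    obtain ⟨ha1, hb1⟩ := hilb_lt n r1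
    obtain ⟨ha2, hb2⟩ := hilb_lt n r2
    have hx1z : (((hilb n r1).1 : ℕ) : ℤ) < (2:ℤ) ^ n := by rw [← ePZ2]; exact_mod_cast ha1
    have hy1z : (((hilb n r1).2 : ℕ) : ℤ) < (2:ℤ) ^ n := by rw [← ePZ2]; exact_mod_cast hb1
    have hx2z : (((hilb n r2).1 : ℕ) : ℤ) < (2:ℤ) ^ n := by rw [← ePZ2]; exact_mod_cast ha2
    have hy2z : (((hilb n r2).2 : ℕ) : ℤ) < (2:ℤ) ^ n := by rw [← ePZ2]; exact_mod_cast hb2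
    interval_cases q1 <;> interval_cases q2
    -- (0,0)
    · rw [hilb_q0' n r1 hr1, hilb_q0' n r2 hr2]
      dsimp only
      have IH := ih r1 r2 (by omega) hr2
      have cR : ((0 * 4 ^ n + r2 : ℕ) : ℤ) - ((0 * 4 ^ n + r1 : ℕ) : ℤ) = (r2:ℤ) - (r1:ℤ) := by
        omega
      rw [cR]
      linarith [IH]
    -- (0,1)
    · rw [hilb_q0' n r1 hr1, hilb_q1' n r2 hr2]
      dsimp only
      have EL1 := hilb_EL n r1 hr1
      have SL2 := hilb_SL n r2 hr2
      zify [show (1:ℕ) ≤ 2^n by omega, show (hilb n r1).1 ≤ 2^n - 1 by omega,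
        show (1:ℕ) ≤ 4^n by omega, show r1 ≤ 4^n - 1 by omega] at EL1
      zify at SL2
      have key := KL ((2:ℤ)^n - 1 - ((hilb n r1).1 : ℤ)) (((hilb n r1).2 : ℤ))
        (((hilb n r2).2 : ℤ)) (((hilb n r2).1 : ℤ))
        ((4:ℤ)^n - 1 - (r1:ℤ)) (r2:ℤ)
        (by linarith [hx1z]) (by positivity) (by positivity) (by positivity)
        (by linarith [EL1]) (by rw [max_comm]; linarith [SL2])
      have c1 : (((hilb n r2).2 + 2 ^ n : ℕ) : ℤ) = ((hilb n r2).2 : ℤ) + (2:ℤ)^n := by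
        push_cast; ring
      have cR : ((1 * 4 ^ n + r2 : ℕ) : ℤ) - ((0 * 4 ^ n + r1 : ℕ) : ℤ)
          = (((4:ℕ)^n : ℕ) : ℤ) + (r2:ℤ) - (r1:ℤ) := by omega
      rw [c1]
      linarith [key, cR, ePZ4]
    -- (0,2)
    · rw [hilb_q0' n r1 hr1, hilb_q2' n r2 hr2]
      dsimp only
      have hN : (1:ℤ) ≤ (2:ℤ)^n := by rw [← ePZ2]; exact_mod_cast h2
      have c1 : (((hilb n r2).1 + 2 ^ n : ℕ) : ℤ) = ((hilb n r2).1 : ℤ) + (2:ℤ)^n := by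
        push_cast; ring
      have c2 : (((hilb n r2).2 + 2 ^ n : ℕ) : ℤ) = ((hilb n r2).2 : ℤ) + (2:ℤ)^n := by
        push_cast; ring
      have cR : ((2 * 4 ^ n + r2 : ℕ) : ℤ) - ((0 * 4 ^ n + r1 : ℕ) : ℤ)
          = (((4:ℕ)^n : ℕ) : ℤ) + (((4:ℕ)^n : ℕ) : ℤ) + (r2:ℤ) - (r1:ℤ) := by omega
      rw [c1, c2]
      by_cases hc : (4 ^ n - 1 - r1) + r2 ≤ 4 ^ n + 1
      · have EL1 := hilb_EL n r1 hr1
        have SL2 := hilb_SL n r2 hr2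
        zify [show (1:ℕ) ≤ 2^n by omega, show (hilb n r1).1 ≤ 2^n - 1 by omega,
          show (1:ℕ) ≤ 4^n by omega, show r1 ≤ 4^n - 1 by omega] at EL1
        zify at SL2
        zify [show r1 ≤ 4^n - 1 by omega, show (1:ℕ) ≤ 4^n by omega] at hc
        have hm1 : (0:ℤ) ≤ max ((2:ℤ)^n - 1 - ((hilb n r1).1 : ℤ)) (((hilb n r1).2 : ℤ)) :=
          le_max_of_le_right (by positivity)
        have hm2 : (0:ℤ) ≤ max (((hilb n r2).1 : ℤ)) (((hilb n r2).2 : ℤ)) :=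
          le_max_of_le_right (by positivity)
        have far := FAR (-((hilb n r1).2 : ℤ)) ((2:ℤ)^n - 1 - ((hilb n r1).1 : ℤ))
          ((2:ℤ)^n) 1 (((hilb n r2).1 : ℤ)) (((hilb n r2).2 : ℤ))
          ((4:ℤ)^n - 1 - (r1:ℤ)) (r2:ℤ) ((4:ℤ)^n)
          (by linarith [EL1, hm1]) (by linarith [SL2, hm2])
          (by linarith [eZN]) (by linarith [hc])
        linarith [far, cR, ePZ4]
      · have hB : (r1:ℤ) + 3 ≤ (r2:ℤ) := by omega
        have crude := CRUDE (((hilb n r1).2 : ℤ)) (((hilb n r1).1 : ℤ))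
          (((hilb n r2).1 : ℤ) + (2:ℤ)^n) (((hilb n r2).2 : ℤ) + (2:ℤ)^n)
          (((2 * 4 ^ n + r2 : ℕ) : ℤ) - ((0 * 4 ^ n + r1 : ℕ) : ℤ)) ((2:ℤ)^n) hN
          (by positivity) (by linarith [hy1z]) (by positivity) (by linarith [hx1z])
          (by positivity) (by linarith [hx2z]) (by positivity) (by linarith [hy2z])
          (by linarith [cR, ePZ4, eZN, hB])
        linarith [crude]
    -- (0,3)
    · rw [hilb_q0' n r1 hr1, hilb_q3' n r2 hr2]
      dsimp only
      have hN : (1:ℤ) ≤ (2:ℤ)^n := by rw [← ePZ2]; exact_mod_cast h2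
      have c1 : ((2 ^ (n+1) - 1 - (hilb n r2).2 : ℕ) : ℤ) = 2*(2:ℤ)^n - 1 - ((hilb n r2).2 : ℤ) := by
        rw [Nat.cast_sub (by omega), Nat.cast_sub (by omega)]; push_cast; ring
      have c2 : ((2 ^ n - 1 - (hilb n r2).1 : ℕ) : ℤ) = (2:ℤ)^n - 1 - ((hilb n r2).1 : ℤ) := by
        rw [Nat.cast_sub (by omega), Nat.cast_sub (by omega)]; push_cast; ring
      have cR : ((3 * 4 ^ n + r2 : ℕ) : ℤ) - ((0 * 4 ^ n + r1 : ℕ) : ℤ)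
          = (((4:ℕ)^n : ℕ) : ℤ) + (((4:ℕ)^n : ℕ) : ℤ) + (((4:ℕ)^n : ℕ) : ℤ) + (r2:ℤ) - (r1:ℤ) := by
        omega
      rw [c1, c2]
      have hr1z : (r1:ℤ) ≤ (((4:ℕ)^n : ℕ) : ℤ) - 1 := by omega
      have crude := CRUDE (((hilb n r1).2 : ℤ)) (((hilb n r1).1 : ℤ))
        (2*(2:ℤ)^n - 1 - ((hilb n r2).2 : ℤ)) ((2:ℤ)^n - 1 - ((hilb n r2).1 : ℤ))
        (((3 * 4 ^ n + r2 : ℕ) : ℤ) - ((0 * 4 ^ n + r1 : ℕ) : ℤ)) ((2:ℤ)^n) hN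
        (by positivity) (by linarith [hy1z]) (by positivity) (by linarith [hx1z])
        (by linarith [hy2z]) (by linarith [hy2z, hN]) (by linarith [hx2z])
        (by linarith [hx2z, hN])
        (by linarith [cR, ePZ4, eZN, hr1z])
      linarith [crude]
    -- (1,0) impossible
    · omega
    -- (1,1)
    · rw [hilb_q1' n r1 hr1, hilb_q1' n r2 hr2]
      dsimp only
      have IH := ih r1 r2 (by omega) hr2
      have cR : ((1 * 4 ^ n + r2 : ℕ) : ℤ) - ((1 * 4 ^ n + r1 : ℕ) : ℤ) = (r2:ℤ) - (r1:ℤ) := by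
        omega
      have c1 : (((hilb n r2).2 + 2 ^ n : ℕ) : ℤ) = ((hilb n r2).2 : ℤ) + (2:ℤ)^n := by
        push_cast; ring
      have c2 : (((hilb n r1).2 + 2 ^ n : ℕ) : ℤ) = ((hilb n r1).2 : ℤ) + (2:ℤ)^n := by
        push_cast; ring
      rw [cR, c1, c2]
      linarith [IH]
    -- (1,2)
    · rw [hilb_q1' n r1 hr1, hilb_q2' n r2 hr2]
      dsimp only
      have EL1 := hilb_EL n r1 hr1
      have SL2 := hilb_SL n r2 hr2
      zify [show (1:ℕ) ≤ 2^n by omega, show (hilb n r1).1 ≤ 2^n - 1 by omega,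
        show (1:ℕ) ≤ 4^n by omega, show r1 ≤ 4^n - 1 by omega] at EL1
      zify at SL2
      have key := KL ((2:ℤ)^n - 1 - ((hilb n r1).1 : ℤ)) (((hilb n r1).2 : ℤ))
        (((hilb n r2).1 : ℤ)) (((hilb n r2).2 : ℤ))
        ((4:ℤ)^n - 1 - (r1:ℤ)) (r2:ℤ)
        (by linarith [hx1z]) (by positivity) (by positivity) (by positivity)
        (by linarith [EL1]) (by linarith [SL2])
      have c1 : (((hilb n r2).1 + 2 ^ n : ℕ) : ℤ) = ((hilb n r2).1 : ℤ) + (2:ℤ)^n := by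
        push_cast; ring
      have c2 : (((hilb n r2).2 + 2 ^ n : ℕ) : ℤ) = ((hilb n r2).2 : ℤ) + (2:ℤ)^n := by
        push_cast; ring
      have c3 : (((hilb n r1).2 + 2 ^ n : ℕ) : ℤ) = ((hilb n r1).2 : ℤ) + (2:ℤ)^n := by
        push_cast; ring
      have cR : ((2 * 4 ^ n + r2 : ℕ) : ℤ) - ((1 * 4 ^ n + r1 : ℕ) : ℤ)
          = (((4:ℕ)^n : ℕ) : ℤ) + (r2:ℤ) - (r1:ℤ) := by omega
      rw [c1, c2, c3]
      linarith [key, cR, ePZ4]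
    -- (1,3)
    · rw [hilb_q1' n r1 hr1, hilb_q3' n r2 hr2]
      dsimp only
      have hN : (1:ℤ) ≤ (2:ℤ)^n := by rw [← ePZ2]; exact_mod_cast h2
      have c1 : ((2 ^ (n+1) - 1 - (hilb n r2).2 : ℕ) : ℤ) = 2*(2:ℤ)^n - 1 - ((hilb n r2).2 : ℤ) := by
        rw [Nat.cast_sub (by omega), Nat.cast_sub (by omega)]; push_cast; ring
      have c2 : ((2 ^ n - 1 - (hilb n r2).1 : ℕ) : ℤ) = (2:ℤ)^n - 1 - ((hilb n r2).1 : ℤ) := by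
        rw [Nat.cast_sub (by omega), Nat.cast_sub (by omega)]; push_cast; ring
      have c3 : (((hilb n r1).2 + 2 ^ n : ℕ) : ℤ) = ((hilb n r1).2 : ℤ) + (2:ℤ)^n := by
        push_cast; ring
      have cR : ((3 * 4 ^ n + r2 : ℕ) : ℤ) - ((1 * 4 ^ n + r1 : ℕ) : ℤ)
          = (((4:ℕ)^n : ℕ) : ℤ) + (((4:ℕ)^n : ℕ) : ℤ) + (r2:ℤ) - (r1:ℤ) := by omega
      rw [c1, c2, c3]
      by_cases hc : (4 ^ n - 1 - r1) + r2 ≤ 4 ^ n + 1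
      · have EL1 := hilb_EL n r1 hr1
        have SL2 := hilb_SL n r2 hr2
        zify [show (1:ℕ) ≤ 2^n by omega, show (hilb n r1).1 ≤ 2^n - 1 by omega,
          show (1:ℕ) ≤ 4^n by omega, show r1 ≤ 4^n - 1 by omega] at EL1
        zify at SL2
        zify [show r1 ≤ 4^n - 1 by omega, show (1:ℕ) ≤ 4^n by omega] at hc
        have hm1 : (0:ℤ) ≤ max ((2:ℤ)^n - 1 - ((hilb n r1).1 : ℤ)) (((hilb n r1).2 : ℤ)) :=
          le_max_of_le_right (by positivity)
        have hm2 : (0:ℤ) ≤ max (((hilb n r2).1 : ℤ)) (((hilb n r2).2 : ℤ)) :=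
          le_max_of_le_right (by positivity)
        have far := FAR ((2:ℤ)^n - 1 - ((hilb n r1).1 : ℤ)) (-((hilb n r1).2 : ℤ))
          ((2:ℤ)^n) (-1) (-((hilb n r2).2 : ℤ)) (-((hilb n r2).1 : ℤ))
          ((4:ℤ)^n - 1 - (r1:ℤ)) (r2:ℤ) ((4:ℤ)^n)
          (by linarith [EL1, hm1]) (by linarith [SL2, hm2])
          (by linarith [eZN]) (by linarith [hc])
        linarith [far, cR, ePZ4]
      · have hB : (r1:ℤ) + 3 ≤ (r2:ℤ) := by omega
        have crude := CRUDE (((hilb n r1).1 : ℤ)) (((hilb n r1).2 : ℤ) + (2:ℤ)^n)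
          (2*(2:ℤ)^n - 1 - ((hilb n r2).2 : ℤ)) ((2:ℤ)^n - 1 - ((hilb n r2).1 : ℤ))
          (((3 * 4 ^ n + r2 : ℕ) : ℤ) - ((1 * 4 ^ n + r1 : ℕ) : ℤ)) ((2:ℤ)^n) hN
          (by positivity) (by linarith [hx1z]) (by positivity) (by linarith [hy1z])
          (by linarith [hy2z]) (by linarith [hy2z, hN]) (by linarith [hx2z])
          (by linarith [hx2z, hN])
          (by linarith [cR, ePZ4, eZN, hB])
        linarith [crude]
    -- (2,0)
    · omega
    -- (2,1)
    · omega
    -- (2,2)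
    · rw [hilb_q2' n r1 hr1, hilb_q2' n r2 hr2]
      dsimp only
      have IH := ih r1 r2 (by omega) hr2
      have cR : ((2 * 4 ^ n + r2 : ℕ) : ℤ) - ((2 * 4 ^ n + r1 : ℕ) : ℤ) = (r2:ℤ) - (r1:ℤ) := by
        omega
      have c1 : (((hilb n r2).2 + 2 ^ n : ℕ) : ℤ) = ((hilb n r2).2 : ℤ) + (2:ℤ)^n := by
        push_cast; ring
      have c2 : (((hilb n r1).2 + 2 ^ n : ℕ) : ℤ) = ((hilb n r1).2 : ℤ) + (2:ℤ)^n := by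
        push_cast; ring
      have c3 : (((hilb n r2).1 + 2 ^ n : ℕ) : ℤ) = ((hilb n r2).1 : ℤ) + (2:ℤ)^n := by
        push_cast; ring
      have c4 : (((hilb n r1).1 + 2 ^ n : ℕ) : ℤ) = ((hilb n r1).1 : ℤ) + (2:ℤ)^n := by
        push_cast; ring
      rw [cR, c1, c2, c3, c4]
      linarith [IH]
    -- (2,3)
    · rw [hilb_q2' n r1 hr1, hilb_q3' n r2 hr2]
      dsimp only
      have EL1 := hilb_EL n r1 hr1
      have SL2 := hilb_SL n r2 hr2
      zify [show (1:ℕ) ≤ 2^n by omega, show (hilb n r1).1 ≤ 2^n - 1 by omega,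
        show (1:ℕ) ≤ 4^n by omega, show r1 ≤ 4^n - 1 by omega] at EL1
      zify at SL2
      have key := KL (((hilb n r1).2 : ℤ)) ((2:ℤ)^n - 1 - ((hilb n r1).1 : ℤ))
        (((hilb n r2).1 : ℤ)) (((hilb n r2).2 : ℤ))
        ((4:ℤ)^n - 1 - (r1:ℤ)) (r2:ℤ)
        (by positivity) (by linarith [hx1z]) (by positivity) (by positivity)
        (by rw [max_comm]; linarith [EL1]) (by linarith [SL2])
      have c1 : ((2 ^ (n+1) - 1 - (hilb n r2).2 : ℕ) : ℤ) = 2*(2:ℤ)^n - 1 - ((hilb n r2).2 : ℤ) := by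
        rw [Nat.cast_sub (by omega), Nat.cast_sub (by omega)]; push_cast; ring
      have c2 : ((2 ^ n - 1 - (hilb n r2).1 : ℕ) : ℤ) = (2:ℤ)^n - 1 - ((hilb n r2).1 : ℤ) := by
        rw [Nat.cast_sub (by omega), Nat.cast_sub (by omega)]; push_cast; ring
      have c3 : (((hilb n r1).1 + 2 ^ n : ℕ) : ℤ) = ((hilb n r1).1 : ℤ) + (2:ℤ)^n := by
        push_cast; ring
      have c4 : (((hilb n r1).2 + 2 ^ n : ℕ) : ℤ) = ((hilb n r1).2 : ℤ) + (2:ℤ)^n := by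
        push_cast; ring
      have cR : ((3 * 4 ^ n + r2 : ℕ) : ℤ) - ((2 * 4 ^ n + r1 : ℕ) : ℤ)
          = (((4:ℕ)^n : ℕ) : ℤ) + (r2:ℤ) - (r1:ℤ) := by omega
      rw [c1, c2, c3, c4]
      linarith [key, cR, ePZ4]
    -- (3,0)
    · omega
    -- (3,1)
    · omega
    -- (3,2)
    · omega
    -- (3,3)
    · rw [hilb_q3' n r1 hr1, hilb_q3' n r2 hr2]
      dsimp only
      have IH := ih r1 r2 (by omega) hr2
      have cR : ((3 * 4 ^ n + r2 : ℕ) : ℤ) - ((3 * 4 ^ n + r1 : ℕ) : ℤ) = (r2:ℤ) - (r1:ℤ) := by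
        omega
      have c1 : ((2 ^ (n+1) - 1 - (hilb n r2).2 : ℕ) : ℤ) = 2*(2:ℤ)^n - 1 - ((hilb n r2).2 : ℤ) := by
        rw [Nat.cast_sub (by omega), Nat.cast_sub (by omega)]; push_cast; ring
      have c2 : ((2 ^ (n+1) - 1 - (hilb n r1).2 : ℕ) : ℤ) = 2*(2:ℤ)^n - 1 - ((hilb n r1).2 : ℤ) := by
        rw [Nat.cast_sub (by omega), Nat.cast_sub (by omega)]; push_cast; ring
      have c3 : ((2 ^ n - 1 - (hilb n r2).1 : ℕ) : ℤ) = (2:ℤ)^n - 1 - ((hilb n r2).1 : ℤ) := by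
        rw [Nat.cast_sub (by omega), Nat.cast_sub (by omega)]; push_cast; ring
      have c4 : ((2 ^ n - 1 - (hilb n r1).1 : ℕ) : ℤ) = (2:ℤ)^n - 1 - ((hilb n r1).1 : ℤ) := by
        rw [Nat.cast_sub (by omega), Nat.cast_sub (by omega)]; push_cast; ring
      rw [cR, c1, c2, c3, c4]
      linarith [IH]

def badj (p q : Fin 2 × Fin 2) : Prop :=
  (p.1 = q.1 ∧ p.2 ≠ q.2) ∨ (p.2 = q.2 ∧ p.1 ≠ q.1)

instance (p q : Fin 2 × Fin 2) : Decidable (badj p q) := by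
  unfold badj; infer_instance

set_option synthInstance.maxHeartbeats 1000000 in
set_option synthInstance.maxSize 2048 in
set_option maxHeartbeats 4000000 in
lemma bit_uniq : ∀ p0 p1 p2 p3 q1 q2 q3 : Fin 2 × Fin 2,
    (p0 ≠ p1 ∧ p0 ≠ p2 ∧ p0 ≠ p3 ∧ p1 ≠ p2 ∧ p1 ≠ p3 ∧ p2 ≠ p3) →
    (p0 ≠ q1 ∧ p0 ≠ q2 ∧ p0 ≠ q3 ∧ q1 ≠ q2 ∧ q1 ≠ q3 ∧ q2 ≠ q3) →
    (badj p0 p1 ∧ badj p1 p2 ∧ badj p2 p3) →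
    (badj p0 q1 ∧ badj q1 q2 ∧ badj q2 q3) →
    (p3.1 = q3.1 ∨ p3.2 = q3.2) →
    p1 = q1 ∧ p2 = q2 ∧ p3 = q3 := by decide

def bits (v w : ℕ) : Fin 2 × Fin 2 :=
  (⟨v % 2, Nat.mod_lt _ (by norm_num)⟩, ⟨w % 2, Nat.mod_lt _ (by norm_num)⟩)

lemma bits_ne (v w v' w' X Y : ℕ) (hv : v / 2 = X) (hw : w / 2 = Y)
    (hv' : v' / 2 = X) (hw' : w' / 2 = Y) (hne : ¬(v = v' ∧ w = w')) :
    bits v w ≠ bits v' w' := by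
  intro h
  simp only [bits, Prod.mk.injEq, Fin.mk.injEq] at h
  omega

lemma bits_badj (v w v' w' X Y : ℕ) (hv : v / 2 = X) (hw : w / 2 = Y)
    (hv' : v' / 2 = X) (hw' : w' / 2 = Y)
    (hs : (v = v' ∧ (w = w' + 1 ∨ w' = w + 1)) ∨ (w = w' ∧ (v = v' + 1 ∨ v' = v + 1))) :
    badj (bits v w) (bits v' w') := by
  unfold badj bits
  simp only [Fin.mk.injEq, ne_eq]
  omega

lemma bits_eq (v w v' w' X Y : ℕ) (hv : v / 2 = X) (hw : w / 2 = Y)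
    (hv' : v' / 2 = X) (hw' : w' / 2 = Y) (h : bits v w = bits v' w') :
    v = v' ∧ w = w' := by
  simp only [bits, Prod.mk.injEq, Fin.mk.injEq] at h
  omega

lemma bits_fst (v w v' w' : ℕ) (h : v = v') : (bits v w).1 = (bits v' w').1 := by
  simp only [bits, Fin.mk.injEq]; omega

lemma bits_snd (v w v' w' : ℕ) (h : w = w') : (bits v w).2 = (bits v' w').2 := by
  simp only [bits, Fin.mk.injEq]; omega

lemma block_uniq (X Y v0 w0 v1 w1 v2 w2 v3 w3 V1 W1 V2 W2 V3 W3 : ℕ)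
    (hv0 : v0 / 2 = X) (hw0 : w0 / 2 = Y)
    (hv1 : v1 / 2 = X) (hw1 : w1 / 2 = Y)
    (hv2 : v2 / 2 = X) (hw2 : w2 / 2 = Y)
    (hv3 : v3 / 2 = X) (hw3 : w3 / 2 = Y)
    (hV1 : V1 / 2 = X) (hW1 : W1 / 2 = Y)
    (hV2 : V2 / 2 = X) (hW2 : W2 / 2 = Y)
    (hV3 : V3 / 2 = X) (hW3 : W3 / 2 = Y)
    (x01 : ¬(v0 = v1 ∧ w0 = w1)) (x02 : ¬(v0 = v2 ∧ w0 = w2)) (x03 : ¬(v0 = v3 ∧ w0 = w3))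
    (x12 : ¬(v1 = v2 ∧ w1 = w2)) (x13 : ¬(v1 = v3 ∧ w1 = w3)) (x23 : ¬(v2 = v3 ∧ w2 = w3))
    (y01 : ¬(v0 = V1 ∧ w0 = W1)) (y02 : ¬(v0 = V2 ∧ w0 = W2)) (y03 : ¬(v0 = V3 ∧ w0 = W3))
    (y12 : ¬(V1 = V2 ∧ W1 = W2)) (y13 : ¬(V1 = V3 ∧ W1 = W3)) (y23 : ¬(V2 = V3 ∧ W2 = W3))
    (s01 : (v0 = v1 ∧ (w0 = w1 + 1 ∨ w1 = w0 + 1)) ∨ (w0 = w1 ∧ (v0 = v1 + 1 ∨ v1 = v0 + 1)))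
    (s12 : (v1 = v2 ∧ (w1 = w2 + 1 ∨ w2 = w1 + 1)) ∨ (w1 = w2 ∧ (v1 = v2 + 1 ∨ v2 = v1 + 1)))
    (s23 : (v2 = v3 ∧ (w2 = w3 + 1 ∨ w3 = w2 + 1)) ∨ (w2 = w3 ∧ (v2 = v3 + 1 ∨ v3 = v2 + 1)))
    (S01 : (v0 = V1 ∧ (w0 = W1 + 1 ∨ W1 = w0 + 1)) ∨ (w0 = W1 ∧ (v0 = V1 + 1 ∨ V1 = v0 + 1)))
    (S12 : (V1 = V2 ∧ (W1 = W2 + 1 ∨ W2 = W1 + 1)) ∨ (W1 = W2 ∧ (V1 = V2 + 1 ∨ V2 = V1 + 1)))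
    (S23 : (V2 = V3 ∧ (W2 = W3 + 1 ∨ W3 = W2 + 1)) ∨ (W2 = W3 ∧ (V2 = V3 + 1 ∨ V3 = V2 + 1)))
    (hex : v3 = V3 ∨ w3 = W3) :
    v1 = V1 ∧ w1 = W1 ∧ v2 = V2 ∧ w2 = W2 ∧ v3 = V3 ∧ w3 = W3 := by
  have key := bit_uniq (bits v0 w0) (bits v1 w1) (bits v2 w2) (bits v3 w3)
      (bits V1 W1) (bits V2 W2) (bits V3 W3)
    ⟨bits_ne _ _ _ _ X Y hv0 hw0 hv1 hw1 x01, bits_ne _ _ _ _ X Y hv0 hw0 hv2 hw2 x02,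
     bits_ne _ _ _ _ X Y hv0 hw0 hv3 hw3 x03, bits_ne _ _ _ _ X Y hv1 hw1 hv2 hw2 x12,
     bits_ne _ _ _ _ X Y hv1 hw1 hv3 hw3 x13, bits_ne _ _ _ _ X Y hv2 hw2 hv3 hw3 x23⟩
    ⟨bits_ne _ _ _ _ X Y hv0 hw0 hV1 hW1 y01, bits_ne _ _ _ _ X Y hv0 hw0 hV2 hW2 y02,
     bits_ne _ _ _ _ X Y hv0 hw0 hV3 hW3 y03, bits_ne _ _ _ _ X Y hV1 hW1 hV2 hW2 y12,
     bits_ne _ _ _ _ X Y hV1 hW1 hV3 hW3 y13, bits_ne _ _ _ _ X Y hV2 hW2 hV3 hW3 y23⟩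
    ⟨bits_badj _ _ _ _ X Y hv0 hw0 hv1 hw1 s01, bits_badj _ _ _ _ X Y hv1 hw1 hv2 hw2 s12,
     bits_badj _ _ _ _ X Y hv2 hw2 hv3 hw3 s23⟩
    ⟨bits_badj _ _ _ _ X Y hv0 hw0 hV1 hW1 S01, bits_badj _ _ _ _ X Y hV1 hW1 hV2 hW2 S12,
     bits_badj _ _ _ _ X Y hV2 hW2 hV3 hW3 S23⟩
    (by rcases hex with h | h
        · exact Or.inl (bits_fst _ _ _ _ h)
        · exact Or.inr (bits_snd _ _ _ _ h))
  obtain ⟨k1, k2, k3⟩ := key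
  obtain ⟨e1, e2⟩ := bits_eq _ _ _ _ X Y hv1 hw1 hV1 hW1 k1
  obtain ⟨e3, e4⟩ := bits_eq _ _ _ _ X Y hv2 hw2 hV2 hW2 k2
  obtain ⟨e5, e6⟩ := bits_eq _ _ _ _ X Y hv3 hw3 hV3 hW3 k3
  exact ⟨e1, e2, e3, e4, e5, e6⟩

lemma edge_nadj {m : ℕ} {c d : Fin m × Fin m} (h : edgeAdj c d) :
    (((c.1 : ℕ)) = ((d.1 : ℕ)) ∧ (((c.2 : ℕ)) = ((d.2 : ℕ)) + 1 ∨ ((d.2 : ℕ)) = ((c.2 : ℕ)) + 1)) ∨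
    (((c.2 : ℕ)) = ((d.2 : ℕ)) ∧ (((c.1 : ℕ)) = ((d.1 : ℕ)) + 1 ∨ ((d.1 : ℕ)) = ((c.1 : ℕ)) + 1)) := by
  unfold edgeAdj at h
  rcases abs_cases (((c.1 : ℕ) : ℤ) - ((d.1 : ℕ) : ℤ)) with ⟨h1, _⟩ | ⟨h1, _⟩ <;>
    rcases abs_cases (((c.2 : ℕ) : ℤ) - ((d.2 : ℕ) : ℤ)) with ⟨h2, _⟩ | ⟨h2, _⟩ <;>
    omega

def phx (φ : ∀ n : ℕ, GridEnum n) (m k : ℕ) : ℕ :=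
  if hk : k < 4 ^ m then ((φ m ⟨k, hk⟩).1 : ℕ) else 0

def phy (φ : ∀ n : ℕ, GridEnum n) (m k : ℕ) : ℕ :=
  if hk : k < 4 ^ m then ((φ m ⟨k, hk⟩).2 : ℕ) else 0

lemma phx_eq (φ : ∀ n : ℕ, GridEnum n) {m k : ℕ} (hk : k < 4 ^ m) :
    phx φ m k = ((φ m ⟨k, hk⟩).1 : ℕ) := dif_pos hk

lemma phy_eq (φ : ∀ n : ℕ, GridEnum n) {m k : ℕ} (hk : k < 4 ^ m) :
    phy φ m k = ((φ m ⟨k, hk⟩).2 : ℕ) := dif_pos hk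

lemma phx_lt (φ : ∀ n : ℕ, GridEnum n) {m k : ℕ} (hk : k < 4 ^ m) : phx φ m k < 2 ^ m := by
  rw [phx_eq φ hk]; exact (φ m ⟨k, hk⟩).1.isLt

lemma phy_lt (φ : ∀ n : ℕ, GridEnum n) {m k : ℕ} (hk : k < 4 ^ m) : phy φ m k < 2 ^ m := by
  rw [phy_eq φ hk]; exact (φ m ⟨k, hk⟩).2.isLt

lemma level_step (φ : ∀ n : ℕ, GridEnum n) (n : ℕ)
    (hadj1 : ConsecEdgeAdj (φ (n+1))) (hend1 : EndpointCond (φ (n+1)))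
    (NSTx : ∀ k, k < 4 ^ (n+1) → phx φ (n+1) k / 2 = (hilb n (k / 4)).1)
    (NSTy : ∀ k, k < 4 ^ (n+1) → phy φ (n+1) k / 2 = (hilb n (k / 4)).2) :
    ∀ k, k < 4 ^ (n+1) → (phx φ (n+1) k, phy φ (n+1) k) = hilb (n+1) k := by
  have hp4 : (0:ℕ) < 4 ^ n := Nat.pow_pos (by norm_num)
  have hp41 : (0:ℕ) < 4 ^ (n+1) := Nat.pow_pos (by norm_num)
  have hp2 : (0:ℕ) < 2 ^ (n+1) := Nat.pow_pos (by norm_num)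
  have e4 : (4:ℕ) ^ (n+1) = 4 * 4 ^ n := by ring
  -- adjacency, nat form
  have ADJ : ∀ k, k + 1 < 4 ^ (n+1) →
      (phx φ (n+1) k = phx φ (n+1) (k+1) ∧
        (phy φ (n+1) k = phy φ (n+1) (k+1) + 1 ∨ phy φ (n+1) (k+1) = phy φ (n+1) k + 1)) ∨
      (phy φ (n+1) k = phy φ (n+1) (k+1) ∧
        (phx φ (n+1) k = phx φ (n+1) (k+1) + 1 ∨ phx φ (n+1) (k+1) = phx φ (n+1) k + 1)) := by
    intro k hk
    have hk0 : k < 4 ^ (n+1) := by omega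
    have h : edgeAdj (φ (n+1) ⟨k, hk0⟩) (φ (n+1) ⟨k+1, hk⟩) := hadj1 k hk
    have h' := edge_nadj h
    rw [← phx_eq φ hk0, ← phx_eq φ hk, ← phy_eq φ hk0, ← phy_eq φ hk] at h'
    exact h'
  -- injectivity, nat form
  have DST : ∀ k l, k < 4 ^ (n+1) → l < 4 ^ (n+1) → k ≠ l →
      ¬(phx φ (n+1) k = phx φ (n+1) l ∧ phy φ (n+1) k = phy φ (n+1) l) := by
    intro k l hk hl hne hcon
    obtain ⟨h1, h2⟩ := hcon
    rw [phx_eq φ hk, phx_eq φ hl] at h1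
    rw [phy_eq φ hk, phy_eq φ hl] at h2
    have heq : φ (n+1) ⟨k, hk⟩ = φ (n+1) ⟨l, hl⟩ := Prod.ext (Fin.ext h1) (Fin.ext h2)
    have := (φ (n+1)).injective heq
    rw [Fin.mk.injEq] at this
    exact hne this
  -- endpoints, nat form
  have h00 : φ (n+1) ⟨0, hp41⟩ = (⟨0, hp2⟩, ⟨0, hp2⟩) := hend1.1
  have hLL : φ (n+1) ⟨4 ^ (n+1) - 1, by omega⟩ =
      (⟨2 ^ (n+1) - 1, by omega⟩, ⟨0, hp2⟩) := hend1.2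
  have END0x : phx φ (n+1) 0 = 0 := by rw [phx_eq φ hp41, h00]
  have END0y : phy φ (n+1) 0 = 0 := by rw [phy_eq φ hp41, h00]
  have ENDLx : phx φ (n+1) (4 ^ (n+1) - 1) = 2 ^ (n+1) - 1 := by
    rw [phx_eq φ (show 4 ^ (n+1) - 1 < 4 ^ (n+1) by omega)]
    rw [show (⟨4 ^ (n+1) - 1, _⟩ : Fin (4 ^ (n+1))) = ⟨4 ^ (n+1) - 1, by omega⟩ from rfl, hLL]
  have ENDLy : phy φ (n+1) (4 ^ (n+1) - 1) = 0 := by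
    rw [phy_eq φ (show 4 ^ (n+1) - 1 < 4 ^ (n+1) by omega)]
    rw [show (⟨4 ^ (n+1) - 1, _⟩ : Fin (4 ^ (n+1))) = ⟨4 ^ (n+1) - 1, by omega⟩ from rfl, hLL]
  -- the block lemma
  have BLOCK : ∀ a, a < 4 ^ n →
      (phx φ (n+1) (4*a), phy φ (n+1) (4*a)) = hilb (n+1) (4*a) →
      ∀ r, r < 4 → (phx φ (n+1) (4*a+r), phy φ (n+1) (4*a+r)) = hilb (n+1) (4*a+r) := by
    intro a ha hent r hr
    have hk0 : 4*a < 4 ^ (n+1) := by omega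
    have hk1 : 4*a+1 < 4 ^ (n+1) := by omega
    have hk2 : 4*a+2 < 4 ^ (n+1) := by omega
    have hk3 : 4*a+3 < 4 ^ (n+1) := by omega
    -- φ-side nesting facts
    have nx0 := NSTx (4*a) hk0; have ny0 := NSTy (4*a) hk0
    have nx1 := NSTx (4*a+1) hk1; have ny1 := NSTy (4*a+1) hk1
    have nx2 := NSTx (4*a+2) hk2; have ny2 := NSTy (4*a+2) hk2
    have nx3 := NSTx (4*a+3) hk3; have ny3 := NSTy (4*a+3) hk3
    rw [show (4*a)/4 = a by omega] at nx0 ny0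
    rw [show (4*a+1)/4 = a by omega] at nx1 ny1
    rw [show (4*a+2)/4 = a by omega] at nx2 ny2
    rw [show (4*a+3)/4 = a by omega] at nx3 ny3
    -- hilb-side nesting facts
    have mx0 := (hilb_nest n (4*a) hk0).1; have my0 := (hilb_nest n (4*a) hk0).2
    have mx1 := (hilb_nest n (4*a+1) hk1).1; have my1 := (hilb_nest n (4*a+1) hk1).2
    have mx2 := (hilb_nest n (4*a+2) hk2).1; have my2 := (hilb_nest n (4*a+2) hk2).2
    have mx3 := (hilb_nest n (4*a+3) hk3).1; have my3 := (hilb_nest n (4*a+3) hk3).2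
    rw [show (4*a)/4 = a by omega] at mx0 my0
    rw [show (4*a+1)/4 = a by omega] at mx1 my1
    rw [show (4*a+2)/4 = a by omega] at mx2 my2
    rw [show (4*a+3)/4 = a by omega] at mx3 my3
    -- φ-side steps
    have s01 := ADJ (4*a) hk1
    have s12 := ADJ (4*a+1) (by omega)
    have s23 := ADJ (4*a+2) (by omega)
    rw [show 4*a+1+1 = 4*a+2 by omega] at s12
    rw [show 4*a+2+1 = 4*a+3 by omega] at s23
    -- hilb-side steps
    have S01 := hilb_adj (n+1) (4*a) hk1
    have S12 := hilb_adj (n+1) (4*a+1) (by omega)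
    have S23 := hilb_adj (n+1) (4*a+2) (by omega)
    rw [show 4*a+1+1 = 4*a+2 by omega] at S12
    rw [show 4*a+2+1 = 4*a+3 by omega] at S23
    unfold NAdj at S01 S12 S23
    -- φ-side distinctness
    have x01 := DST (4*a) (4*a+1) hk0 hk1 (by omega)
    have x02 := DST (4*a) (4*a+2) hk0 hk2 (by omega)
    have x03 := DST (4*a) (4*a+3) hk0 hk3 (by omega)
    have x12 := DST (4*a+1) (4*a+2) hk1 hk2 (by omega)
    have x13 := DST (4*a+1) (4*a+3) hk1 hk3 (by omega)
    have x23 := DST (4*a+2) (4*a+3) hk2 hk3 (by omega)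
    -- hilb-side distinctness
    have yinj : ∀ k l, k < 4 ^ (n+1) → l < 4 ^ (n+1) → k ≠ l →
        ¬((hilb (n+1) k).1 = (hilb (n+1) l).1 ∧ (hilb (n+1) k).2 = (hilb (n+1) l).2) := by
      intro k l hk hl hne hcon
      exact hne (hilb_inj (n+1) k l hk hl (Prod.ext hcon.1 hcon.2))
    have y01 := yinj (4*a) (4*a+1) hk0 hk1 (by omega)
    have y02 := yinj (4*a) (4*a+2) hk0 hk2 (by omega)
    have y03 := yinj (4*a) (4*a+3) hk0 hk3 (by omega)
    have y12 := yinj (4*a+1) (4*a+2) hk1 hk2 (by omega)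
    have y13 := yinj (4*a+1) (4*a+3) hk1 hk3 (by omega)
    have y23 := yinj (4*a+2) (4*a+3) hk2 hk3 (by omega)
    -- entry components
    have hent1 : phx φ (n+1) (4*a) = (hilb (n+1) (4*a)).1 := by
      rw [← hent]
    have hent2 : phy φ (n+1) (4*a) = (hilb (n+1) (4*a)).2 := by
      rw [← hent]
    -- exit condition
    have hex : phx φ (n+1) (4*a+3) = (hilb (n+1) (4*a+3)).1 ∨
        phy φ (n+1) (4*a+3) = (hilb (n+1) (4*a+3)).2 := by
      by_cases hlast : a + 1 < 4 ^ n
      · -- use next block via nesting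
        have hk4 : 4*a+4 < 4 ^ (n+1) := by omega
        have nx4 := NSTx (4*a+4) hk4; have ny4 := NSTy (4*a+4) hk4
        rw [show (4*a+4)/4 = a+1 by omega] at nx4 ny4
        have mx4 := (hilb_nest n (4*a+4) hk4).1
        have my4 := (hilb_nest n (4*a+4) hk4).2
        rw [show (4*a+4)/4 = a+1 by omega] at mx4 my4
        have s34 := ADJ (4*a+3) (by omega)
        rw [show 4*a+3+1 = 4*a+4 by omega] at s34
        have S34 := hilb_adj (n+1) (4*a+3) (by omega)
        rw [show 4*a+3+1 = 4*a+4 by omega] at S34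
        unfold NAdj at S34
        have CO := hilb_adj n a hlast
        unfold NAdj at CO
        omega
      · -- last block: endpoint
        have h3 : 4*a+3 = 4 ^ (n+1) - 1 := by omega
        left
        rw [h3, ENDLx]
        have := hilb_last (n+1)
        rw [this]
    -- apply block uniqueness
    have key := block_uniq (hilb n a).1 (hilb n a).2
      (phx φ (n+1) (4*a)) (phy φ (n+1) (4*a))
      (phx φ (n+1) (4*a+1)) (phy φ (n+1) (4*a+1))
      (phx φ (n+1) (4*a+2)) (phy φ (n+1) (4*a+2))
      (phx φ (n+1) (4*a+3)) (phy φ (n+1) (4*a+3))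
      ((hilb (n+1) (4*a+1)).1) ((hilb (n+1) (4*a+1)).2)
      ((hilb (n+1) (4*a+2)).1) ((hilb (n+1) (4*a+2)).2)
      ((hilb (n+1) (4*a+3)).1) ((hilb (n+1) (4*a+3)).2)
      nx0 ny0 nx1 ny1 nx2 ny2 nx3 ny3 mx1 my1 mx2 my2 mx3 my3
      x01 x02 x03 x12 x13 x23
      (by rw [hent1, hent2]; exact y01) (by rw [hent1, hent2]; exact y02)
      (by rw [hent1, hent2]; exact y03) y12 y13 y23
      s01 s12 s23
      (by rw [hent1, hent2]; exact S01) S12 S23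
      hex
    obtain ⟨k1, k2, k3, k4, k5, k6⟩ := key
    interval_cases r
    · rw [show 4*a+0 = 4*a by omega]; exact hent
    · exact Prod.ext k1 k2
    · exact Prod.ext k3 k4
    · exact Prod.ext k5 k6
  -- entries by induction
  have ENTRY : ∀ a, a < 4 ^ n → (phx φ (n+1) (4*a), phy φ (n+1) (4*a)) = hilb (n+1) (4*a) := by
    intro a
    induction a with
    | zero =>
      intro _
      rw [show 4*0 = 0 by omega, hilb_zero (n+1)]
      rw [END0x, END0y]
    | succ a iha =>
      intro ha
      have hE := iha (by omega)
      have hb3 := BLOCK a (by omega) hE 3 (by omega)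
      have hb3x : phx φ (n+1) (4*a+3) = (hilb (n+1) (4*a+3)).1 := by rw [← hb3]
      have hb3y : phy φ (n+1) (4*a+3) = (hilb (n+1) (4*a+3)).2 := by rw [← hb3]
      have hk4 : 4*a+4 < 4 ^ (n+1) := by omega
      have nx4 := NSTx (4*a+4) hk4; have ny4 := NSTy (4*a+4) hk4
      rw [show (4*a+4)/4 = a+1 by omega] at nx4 ny4
      have mx4 := (hilb_nest n (4*a+4) hk4).1
      have my4 := (hilb_nest n (4*a+4) hk4).2
      rw [show (4*a+4)/4 = a+1 by omega] at mx4 my4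
      have nx3 := NSTx (4*a+3) (by omega); have ny3 := NSTy (4*a+3) (by omega)
      rw [show (4*a+3)/4 = a by omega] at nx3 ny3
      have s34 := ADJ (4*a+3) (by omega)
      rw [show 4*a+3+1 = 4*a+4 by omega] at s34
      have S34 := hilb_adj (n+1) (4*a+3) (by omega)
      rw [show 4*a+3+1 = 4*a+4 by omega] at S34
      unfold NAdj at S34
      have CO := hilb_adj n a ha
      unfold NAdj at CO
      rw [show 4*(a+1) = 4*a+4 by ring]
      exact Prod.ext (by omega) (by omega)
  -- conclude
  intro k hk
  have hb := BLOCK (k/4) (by omega) (ENTRY (k/4) (by omega)) (k%4) (by omega)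
  rw [show 4*(k/4) + k%4 = k by omega] at hb
  exact hb

lemma phi_eq (φ : ∀ n : ℕ, GridEnum n)
    (hadj : ∀ n : ℕ, 1 ≤ n → ConsecEdgeAdj (φ n))
    (hend : ∀ n : ℕ, 1 ≤ n → EndpointCond (φ n))
    (hnest : ∀ n : ℕ, 1 ≤ n → Nests (φ n) (φ (n + 1))) :
    ∀ n, 1 ≤ n → ∀ k, k < 4 ^ n → (phx φ n k, phy φ n k) = hilb n k := by
  intro n
  induction n with
  | zero => intro h; exact absurd h (by omega)
  | succ n ih =>
    intro _
    rcases Nat.eq_zero_or_pos n with h0 | hpos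
    · subst h0
      refine level_step φ 0 (hadj 1 le_rfl) (hend 1 le_rfl) ?_ ?_
      · intro k hk
        have h1 := phx_lt φ hk
        have h2 := (hilb_lt 0 (k/4)).1
        norm_num at h1 h2 ⊢
        omega
      · intro k hk
        have h1 := phy_lt φ hk
        have h2 := (hilb_lt 0 (k/4)).2
        norm_num at h1 h2 ⊢
        omega
    · refine level_step φ n (hadj (n+1) (by omega)) (hend (n+1) (by omega)) ?_ ?_
      · intro k hk
        have hd : k / 4 < 4 ^ n := by
          have : (4:ℕ) ^ (n+1) = 4 * 4 ^ n := by ring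
          omega
        have h : ((φ (n+1) ⟨k, hk⟩).1 : ℕ) / 2 = ((φ n ⟨k / 4, hd⟩).1 : ℕ) :=
          (hnest n hpos ⟨k, hk⟩).1
        rw [← phx_eq φ hk, ← phx_eq φ hd] at h
        have h2 : phx φ n (k/4) = (hilb n (k/4)).1 :=
          congrArg Prod.fst (ih hpos (k/4) hd)
        omega
      · intro k hk
        have hd : k / 4 < 4 ^ n := by
          have : (4:ℕ) ^ (n+1) = 4 * 4 ^ n := by ring
          omega
        have h : ((φ (n+1) ⟨k, hk⟩).2 : ℕ) / 2 = ((φ n ⟨k / 4, hd⟩).2 : ℕ) :=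
          (hnest n hpos ⟨k, hk⟩).2
        rw [← phy_eq φ hk, ← phy_eq φ hd] at h
        have h2 : phy φ n (k/4) = (hilb n (k/4)).2 :=
          congrArg Prod.snd (ih hpos (k/4) hd)
        omega

/-- For the family of order-`n` Hilbert curves (the grid enumerations satisfying the
adjacency, endpoint and nesting conditions), the squared Euclidean distance between
cells is at most `6` times the index difference: the dilation factor of every
finite-order Hilbert curve approximation is at most `6`. -/
theorem hilbert_dilation_factor_le_six
    (φ : ∀ n : ℕ, GridEnum n)
    (hadj : ∀ n : ℕ, 1 ≤ n → ConsecEdgeAdj (φ n))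
    (hend : ∀ n : ℕ, 1 ≤ n → EndpointCond (φ n))
    (hnest : ∀ n : ℕ, 1 ≤ n → Nests (φ n) (φ (n + 1))) :
    ∀ n : ℕ, ∀ i j : Fin (4 ^ n), i < j →
      ((((φ n j).1 : ℕ) : ℤ) - (((φ n i).1 : ℕ) : ℤ)) ^ 2 +
        ((((φ n j).2 : ℕ) : ℤ) - (((φ n i).2 : ℕ) : ℤ)) ^ 2 ≤
        6 * (((j : ℕ) : ℤ) - ((i : ℕ) : ℤ)) := by
  intro n i j hij
  rcases Nat.eq_zero_or_pos n with h0 | hpos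
  · subst h0
    have hi := i.isLt
    have hj := j.isLt
    have : (i : ℕ) < (j : ℕ) := hij
    norm_num at hi hj
    omega
  · have hij' : (i : ℕ) < (j : ℕ) := hij
    have keyi := phi_eq φ hadj hend hnest n hpos (i : ℕ) i.isLt
    have keyj := phi_eq φ hadj hend hnest n hpos (j : ℕ) j.isLt
    have exi1 : ((φ n i).1 : ℕ) = (hilb n (i : ℕ)).1 := by
      have h1 : phx φ n (i : ℕ) = ((φ n i).1 : ℕ) := phx_eq φ i.isLt
      have h2 : phx φ n (i : ℕ) = (hilb n (i : ℕ)).1 := congrArg Prod.fst keyi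
      omega
    have exi2 : ((φ n i).2 : ℕ) = (hilb n (i : ℕ)).2 := by
      have h1 : phy φ n (i : ℕ) = ((φ n i).2 : ℕ) := phy_eq φ i.isLt
      have h2 : phy φ n (i : ℕ) = (hilb n (i : ℕ)).2 := congrArg Prod.snd keyi
      omega
    have exj1 : ((φ n j).1 : ℕ) = (hilb n (j : ℕ)).1 := by
      have h1 : phx φ n (j : ℕ) = ((φ n j).1 : ℕ) := phx_eq φ j.isLt
      have h2 : phx φ n (j : ℕ) = (hilb n (j : ℕ)).1 := congrArg Prod.fst keyj
      omega
    have exj2 : ((φ n j).2 : ℕ) = (hilb n (j : ℕ)).2 := by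
      have h1 : phy φ n (j : ℕ) = ((φ n j).2 : ℕ) := phy_eq φ j.isLt
      have h2 : phy φ n (j : ℕ) = (hilb n (j : ℕ)).2 := congrArg Prod.snd keyj
      omega
    rw [exi1, exi2, exj1, exj2]
    exact hilb_main n (i : ℕ) (j : ℕ) hij' j.isLt
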